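/- Let B ∈ L⊗ℚ and φ := exp(B)σ. Then the map η : γ ↦ (0, γ, (γ,B)) sends T(X,α_B) into Λ̃ (since (γ,B) ∈ ℤ on T(X,α_B)), is injective, preserves the bilinear pairings (⟨η(γ), η(γ')⟩ = (γ,γ') for all γ, γ' ∈ T(X,α_B)), and its image is exactly T(φ), the orthogonal complement of Pic(φ) in Λ̃. Moreover σ lies in T(X,α_B)⊗ℂ and the ℂ-linear extension of η maps σ to φ; thus η is a Hodge isometry from T(X,α_B) onto T(φ). -/

import Mathlib

/-!
Statement 18: Let B ∈ L⊗ℚ and φ := exp(B)σ. Then the map η : γ ↦ (0, γ, (γ,B)) sends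
T(X,α_B) into Λ̃ (since (γ,B) ∈ ℤ on T(X,α_B)), is injective, preserves the bilinear
pairings, and its image is exactly T(φ), the orthogonal complement of Pic(φ) in Λ̃.
Moreover σ lies in T(X,α_B)⊗ℂ and the ℂ-linear extension of η maps σ to φ; thus η is a
Hodge isometry from T(X,α_B) onto T(φ).
-/

open scoped TensorProduct ComplexOrder

set_option synthInstance.maxHeartbeats 1000000
set_option maxHeartbeats 1000000

noncomputable section

variable (L : Type) [AddCommGroup L]

/-- `L ⊗ ℚ`. -/
abbrev LQ := ℚ ⊗[ℤ] L
/-- `L ⊗ ℂ`. -/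
abbrev LC := ℂ ⊗[ℤ] L

/-- The canonical map `L → L⊗ℚ`. -/
def iLQ : L →ₗ[ℤ] LQ L := TensorProduct.mk ℤ ℚ L 1
/-- The canonical map `L → L⊗ℂ`. -/
def iLC : L →ₗ[ℤ] LC L := TensorProduct.mk ℤ ℂ L 1
/-- The canonical map `L⊗ℚ → L⊗ℂ`. -/
def qToC : LQ L →ₗ[ℤ] LC L :=
  LinearMap.rTensor L ((Algebra.linearMap ℚ ℂ).restrictScalars ℤ)
/-- Complex conjugation on `L⊗ℂ`, fixing the real points. -/
def conjL : LC L →ₗ[ℤ] LC L :=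
  LinearMap.rTensor L ((starRingEnd ℂ).toAddMonoidHom.toIntLinearMap)

/-- The ℚ-bilinear extension of the form on `L` to `L⊗ℚ`. -/
def bQ (l : L →ₗ[ℤ] L →ₗ[ℤ] ℤ) : LinearMap.BilinForm ℚ (LQ L) :=
  LinearMap.BilinForm.baseChange ℚ l
/-- The ℂ-bilinear extension of the form on `L` to `L⊗ℂ`. -/
def bC (l : L →ₗ[ℤ] L →ₗ[ℤ] ℤ) : LinearMap.BilinForm ℂ (LC L) :=
  LinearMap.BilinForm.baseChange ℂ l

/-- The Mukai lattice `Λ̃ = ℤ ⊕ L ⊕ ℤ`. -/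
abbrev MukaiLattice := ℤ × L × ℤ

/-- The embedding `Λ̃ → Λ̃⊗ℂ`. -/
def embC (δ : MukaiLattice L) : ℂ × LC L × ℂ := ((δ.1 : ℂ), iLC L δ.2.1, (δ.2.2 : ℂ))

/-- The integral Mukai pairing on `Λ̃`. -/
def mZ (l : L →ₗ[ℤ] L →ₗ[ℤ] ℤ) (x y : MukaiLattice L) : ℤ :=
  l x.2.1 y.2.1 - x.1 * y.2.2 - y.1 * x.2.2

/-- The Mukai pairing on `Λ̃⊗ℂ`. -/
def mC (l : L →ₗ[ℤ] L →ₗ[ℤ] ℤ) (x y : ℂ × LC L × ℂ) : ℂ :=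
  bC L l x.2.1 y.2.1 - x.1 * y.2.2 - y.1 * x.2.2

/-- The period of the B-field transform, `exp(B)σ := (0, σ, (B,σ))`, for rational `B`. -/
def expB (l : L →ₗ[ℤ] L →ₗ[ℤ] ℤ) (B : LQ L) (σ : LC L) : ℂ × LC L × ℂ :=
  ((0 : ℂ), σ, bC L l (qToC L B) σ)

/-- `Pic(X) := {δ ∈ L : (δ,σ) = 0}`. -/
def PicX (l : L →ₗ[ℤ] L →ₗ[ℤ] ℤ) (σ : LC L) : Set L :=
  {δ : L | bC L l (iLC L δ) σ = 0}

/-- The transcendental lattice `T(X) := {γ ∈ L : (γ,δ) = 0 for all δ ∈ Pic(X)}`. -/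
def TX (l : L →ₗ[ℤ] L →ₗ[ℤ] ℤ) (σ : LC L) : Set L :=
  {γ : L | ∀ δ ∈ PicX L l σ, l γ δ = 0}

/-- `T(X,α_B) := {γ ∈ T(X) : (γ,B) ∈ ℤ}`. -/
def TXB (l : L →ₗ[ℤ] L →ₗ[ℤ] ℤ) (σ : LC L) (B : LQ L) : Set L :=
  {γ : L | γ ∈ TX L l σ ∧ ∃ n : ℤ, bQ L l (iLQ L γ) B = (n : ℚ)}

/-- `Pic(φ) := {δ ∈ Λ̃ : ⟨δ,φ⟩ = 0}`. -/
def PicPhi (l : L →ₗ[ℤ] L →ₗ[ℤ] ℤ) (σ : LC L) (B : LQ L) : Set (MukaiLattice L) :=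
  {δ : MukaiLattice L | mC L l (embC L δ) (expB L l B σ) = 0}

/-- `T(φ) := {γ ∈ Λ̃ : ⟨γ,δ⟩ = 0 for all δ ∈ Pic(φ)}`. -/
def TPhi (l : L →ₗ[ℤ] L →ₗ[ℤ] ℤ) (σ : LC L) (B : LQ L) : Set (MukaiLattice L) :=
  {γ : MukaiLattice L | ∀ δ ∈ PicPhi L l σ B, mZ L l γ δ = 0}


/-! ### Auxiliary lemmas -/

section Aux

lemma iLC_apply' (x : L) : iLC L x = (1:ℂ) ⊗ₜ x := TensorProduct.mk_apply ..
lemma iLQ_apply' (x : L) : iLQ L x = (1:ℚ) ⊗ₜ x := TensorProduct.mk_apply ..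
lemma qToC_tmul' (q : ℚ) (x : L) : qToC L (q ⊗ₜ x) = (q:ℂ) ⊗ₜ x := rfl
lemma bC_tmul' (l : L →ₗ[ℤ] L →ₗ[ℤ] ℤ) (a b : ℂ) (x y : L) :
    bC L l (a ⊗ₜ x) (b ⊗ₜ y) = (l x y : ℂ) * (a * b) := by
  rw [bC, LinearMap.BilinForm.baseChange_tmul]; simp [zsmul_eq_mul]
lemma bQ_tmul' (l : L →ₗ[ℤ] L →ₗ[ℤ] ℤ) (a b : ℚ) (x y : L) :
    bQ L l (a ⊗ₜ x) (b ⊗ₜ y) = (l x y : ℚ) * (a * b) := by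
  rw [bQ, LinearMap.BilinForm.baseChange_tmul]; simp [zsmul_eq_mul]

@[simp] lemma qToC_iLQ (x : L) : qToC L (iLQ L x) = iLC L x := by
  simp [qToC_tmul', iLQ_apply', iLC_apply']

lemma bQ_iLQ_iLQ (l : L →ₗ[ℤ] L →ₗ[ℤ] ℤ) (γ x : L) :
    bQ L l (iLQ L γ) (iLQ L x) = (l γ x : ℚ) := by
  simp [bQ_tmul', iLQ_apply']

lemma bC_iLC_iLC (l : L →ₗ[ℤ] L →ₗ[ℤ] ℤ) (γ x : L) :
    bC L l (iLC L γ) (iLC L x) = (l γ x : ℂ) := by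
  simp [bC_tmul', iLC_apply']

/-- Evaluation of the complexification of an integral functional. -/
def evC (g : L →ₗ[ℤ] ℤ) : LC L →ₗ[ℤ] ℂ :=
  (TensorProduct.rid ℤ ℂ).toLinearMap ∘ₗ LinearMap.lTensor ℂ g
lemma evC_apply' (g : L →ₗ[ℤ] ℤ) (v : LC L) :
    evC L g v = TensorProduct.rid ℤ ℂ (LinearMap.lTensor ℂ g v) := rfl

@[simp] lemma evC_tmul (g : L →ₗ[ℤ] ℤ) (c : ℂ) (x : L) :
    evC L g (c ⊗ₜ x) = (g x : ℂ) * c := by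
  simp [evC_apply', TensorProduct.rid_tmul, zsmul_eq_mul]

lemma evC_smul_iLC (g : L →ₗ[ℤ] ℤ) (c : ℂ) (x : L) :
    evC L g (c • iLC L x) = c * (g x : ℂ) := by
  have h : c • iLC L x = c ⊗ₜ x := by simp [iLC_apply', TensorProduct.smul_tmul']
  rw [h, evC_tmul, mul_comm]

lemma evC_add_apply (g g' : L →ₗ[ℤ] ℤ) (v : LC L) :
    evC L (g + g') v = evC L g v + evC L g' v := by
  simp [evC_apply', LinearMap.lTensor_add]

lemma evC_smul_apply (n : ℤ) (g : L →ₗ[ℤ] ℤ) (v : LC L) :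
    evC L (n • g) v = n • evC L g v := by
  simp only [evC_apply', LinearMap.lTensor_smul,
    LinearMap.smul_apply, map_zsmul]

lemma evC_zero_apply (v : LC L) : evC L 0 v = 0 := by
  simp [evC_apply']

lemma bC_iLC_eq_evC (l : L →ₗ[ℤ] L →ₗ[ℤ] ℤ) (δ : L) (v : LC L) :
    bC L l (iLC L δ) v = evC L (l δ) v := by
  induction v using TensorProduct.induction_on with
  | zero => simp
  | tmul c x => simp [bC_tmul', iLC_apply']
  | add x y hx hy => simp only [map_add, hx, hy]

/-- Clearing denominators in `L ⊗ ℚ`. -/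
lemma exists_int_smul (v : LQ L) : ∃ (N : ℤ) (x : L), 0 < N ∧ N • v = iLQ L x := by
  induction v using TensorProduct.induction_on with
  | zero => exact ⟨1, 0, one_pos, by simp⟩
  | tmul q x =>
    refine ⟨(q.den : ℤ), q.num • x, by exact_mod_cast q.den_pos, ?_⟩
    have h1 : (q.den : ℤ) • (q ⊗ₜ[ℤ] x) = ((q.den : ℚ) * q) ⊗ₜ[ℤ] x := by
      rw [TensorProduct.smul_tmul']
      congr 1
    rw [h1]
    have h2 : (q.den : ℚ) * q = (q.num : ℚ) := by
      rw [mul_comm]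
      exact_mod_cast Rat.mul_den_eq_num q
    rw [h2]
    have h3 : ((q.num : ℚ)) ⊗ₜ[ℤ] x = (q.num • (1 : ℚ)) ⊗ₜ[ℤ] x := by
      simp [zsmul_eq_mul]
    rw [h3, TensorProduct.smul_tmul]
    rfl
  | add u w hu hw =>
    obtain ⟨N, x, hN, hx⟩ := hu
    obtain ⟨M, y, hM, hy⟩ := hw
    refine ⟨N * M, M • x + N • y, mul_pos hN hM, ?_⟩
    have h3 : (N * M) • (u + w) = M • (N • u) + N • (M • w) := by
      module
    rw [h3, hx, hy, map_add, map_smul, map_smul]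

lemma mem_span_top (v : LC L) : v ∈ Submodule.span ℂ (iLC L '' Set.univ) := by
  induction v using TensorProduct.induction_on with
  | zero => exact Submodule.zero_mem _
  | tmul c x =>
    have h : (c ⊗ₜ[ℤ] x : LC L) = c • iLC L x := by simp [iLC_apply', TensorProduct.smul_tmul']
    rw [h]
    exact Submodule.smul_mem _ _ (Submodule.subset_span ⟨x, trivial, rfl⟩)
  | add u w hu hw => exact Submodule.add_mem _ hu hw

lemma span_inter_step (K : Submodule ℤ L) (g₀ : L →ₗ[ℤ] ℤ) (v : LC L)
    (hv : v ∈ Submodule.span ℂ (iLC L '' K)) (h0 : evC L g₀ v = 0) :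
    v ∈ Submodule.span ℂ (iLC L '' ↑(K ⊓ LinearMap.ker g₀)) := by
  set I : Submodule ℤ ℤ := K.map g₀ with hI
  by_cases hIbot : I = ⊥
  · have hK : K ⊓ LinearMap.ker g₀ = K := by
      refine inf_eq_left.mpr fun x hx => ?_
      have hm : g₀ x ∈ I := Submodule.mem_map_of_mem hx
      rw [hIbot] at hm
      simpa [LinearMap.mem_ker] using hm
    rwa [hK]
  · set n : ℤ := Submodule.IsPrincipal.generator I with hn
    have hne : n ≠ 0 := by
      intro h
      apply hIbot
      rw [← Submodule.IsPrincipal.span_singleton_generator I, ← hn, h,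
        Submodule.span_singleton_eq_bot]
    have hnI : n ∈ I := Submodule.IsPrincipal.generator_mem I
    obtain ⟨x₀, hx₀K, hx₀⟩ := hnI
    rw [Submodule.mem_span_set'] at hv
    obtain ⟨m, c, t, hvt⟩ := hv
    have ht : ∀ i, ∃ τ : L, τ ∈ K ∧ iLC L τ = (t i : LC L) := by
      intro i
      obtain ⟨τ, hτ, he⟩ := (t i).2
      exact ⟨τ, hτ, he⟩
    choose τ hτK hτ using ht
    have ha : ∀ i, ∃ a : ℤ, g₀ (τ i) = a * n := by
      intro i
      have hm : g₀ (τ i) ∈ I := Submodule.mem_map_of_mem (hτK i)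
      rw [← Submodule.IsPrincipal.span_singleton_generator I, ← hn,
        Submodule.mem_span_singleton] at hm
      obtain ⟨a, haa⟩ := hm
      exact ⟨a, by rw [← haa]; simp [mul_comm]⟩
    choose a haa using ha
    have hv' : v = ∑ i, c i • iLC L (τ i) := by
      rw [← hvt]
      congr 1
      ext i
      rw [hτ i]
    have hsum : (∑ i, c i * (a i : ℂ)) * (n : ℂ) = 0 := by
      have h1 : evC L g₀ v = ∑ i, c i * ((g₀ (τ i) : ℂ)) := by
        rw [hv', map_sum]
        congr 1
        ext i
        exact evC_smul_iLC L g₀ (c i) (τ i)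
      rw [h0] at h1
      have h2 : ∑ i, c i * (a i : ℂ) * (n : ℂ) = ∑ i, c i * ((g₀ (τ i) : ℂ)) := by
        congr 1
        ext i
        rw [haa i]
        push_cast
        ring
      rw [Finset.sum_mul, h2, ← h1]
    have hzero : (∑ i, c i * (a i : ℂ)) = 0 := by
      rcases mul_eq_zero.mp hsum with h | h
      · exact h
      · exact absurd (by exact_mod_cast h) hne
    have hdecomp : v = ∑ i, c i • iLC L (τ i - a i • x₀)
        + (∑ i, c i * (a i : ℂ)) • iLC L x₀ := by
      rw [hv', Finset.sum_smul, ← Finset.sum_add_distrib]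
      congr 1
      ext i
      rw [map_sub, smul_sub, map_zsmul, mul_smul, Int.cast_smul_eq_zsmul ℂ (a i)]
      abel
    rw [hdecomp, hzero, zero_smul, add_zero]
    refine Submodule.sum_mem _ fun i _ => Submodule.smul_mem _ _ (Submodule.subset_span ?_)
    refine ⟨τ i - a i • x₀, ?_, rfl⟩
    refine Submodule.mem_inf.mpr ⟨Submodule.sub_mem _ (hτK i) (Submodule.smul_mem _ _ hx₀K), ?_⟩
    rw [LinearMap.mem_ker, map_sub, map_zsmul, hx₀, haa i, smul_eq_mul, sub_self]

lemma span_finset (s : Finset (L →ₗ[ℤ] ℤ)) (v : LC L) (h : ∀ g ∈ s, evC L g v = 0) :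
    v ∈ Submodule.span ℂ (iLC L '' ↑(s.inf LinearMap.ker)) := by
  induction s using Finset.cons_induction with
  | empty => simpa [Finset.inf_empty] using mem_span_top L v
  | cons g s hg ih =>
    rw [Finset.inf_cons, inf_comm]
    exact span_inter_step L (s.inf LinearMap.ker) g v
      (ih fun g' hg' => h g' (Finset.mem_cons_of_mem hg')) (h g (Finset.mem_cons_self g s))

end Aux

/-- The map `η : γ ↦ (0, γ, (γ,B))` sends `T(X,α_B)` into `Λ̃`, is
injective, preserves the pairings, has image exactly `T(φ)`; and `σ ∈ T(X,α_B)⊗ℂ` with the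
ℂ-linear extension of `η` mapping `σ` to `φ`: `η` is a Hodge isometry
`T(X,α_B) ≅ T(φ)`. -/
theorem eta_hodge_isometry
    (L : Type) [AddCommGroup L] [Module.Free ℤ L] [Module.Finite ℤ L]
    (l : L →ₗ[ℤ] L →ₗ[ℤ] ℤ) (hsymm : ∀ x y : L, l x y = l y x)
    (σ : LC L) (hσ0 : bC L l σ σ = 0) (hσpos : 0 < bC L l σ (conjL L σ))
    (B : LQ L) :
    (∀ γ ∈ TXB L l σ B, ∀ n : ℤ, bQ L l (iLQ L γ) B = (n : ℚ) →
      ((0 : ℤ), γ, n) ∈ TPhi L l σ B) ∧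
    (∀ γ ∈ TXB L l σ B, ∀ γ' ∈ TXB L l σ B, ∀ n n' : ℤ,
      bQ L l (iLQ L γ) B = (n : ℚ) → bQ L l (iLQ L γ') B = (n' : ℚ) →
      (((0 : ℤ), γ, n) : MukaiLattice L) = ((0 : ℤ), γ', n') → γ = γ') ∧
    (∀ γ ∈ TXB L l σ B, ∀ γ' ∈ TXB L l σ B, ∀ n n' : ℤ,
      bQ L l (iLQ L γ) B = (n : ℚ) → bQ L l (iLQ L γ') B = (n' : ℚ) →
      mZ L l ((0 : ℤ), γ, n) ((0 : ℤ), γ', n') = l γ γ') ∧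
    (∀ x ∈ TPhi L l σ B, ∃ γ ∈ TXB L l σ B, ∃ n : ℤ,
      bQ L l (iLQ L γ) B = (n : ℚ) ∧ x = ((0 : ℤ), γ, n)) ∧
    (σ ∈ Submodule.span ℂ (iLC L '' TXB L l σ B)) ∧
    (((0 : ℂ), σ, bC L l (qToC L B) σ) = expB L l B σ) := by
  obtain ⟨NB, B₀, hNB, hNBe⟩ := exists_int_smul L B
  have hNB' : (NB : ℚ) ≠ 0 := by exact_mod_cast hNB.ne'
  -- Conjunct 1
  have c1 : ∀ γ ∈ TXB L l σ B, ∀ n : ℤ, bQ L l (iLQ L γ) B = (n : ℚ) →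
      ((0 : ℤ), γ, n) ∈ TPhi L l σ B := by
    intro γ hγ n hn δ hδ
    obtain ⟨a, d, b⟩ := δ
    simp only [PicPhi, Set.mem_setOf_eq, mC, embC, expB] at hδ
    set w : LQ L := iLQ L d - a • B with hw
    obtain ⟨N, x, hN, hNx⟩ := exists_int_smul L w
    have hqw : qToC L w = iLC L d - a • qToC L B := by
      rw [hw, map_sub, map_zsmul, qToC_iLQ]
    have hbw : bC L l (qToC L w) σ = 0 := by
      rw [hqw, map_sub, LinearMap.sub_apply, map_zsmul, LinearMap.smul_apply]
      have : bC L l (iLC L d) σ = (a : ℂ) * bC L l (qToC L B) σ := by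
        have h0 := hδ
        simp only [zero_mul, sub_zero] at h0 ⊢
        linear_combination h0
      rw [this, zsmul_eq_mul]
      ring
    have hxPic : x ∈ PicX L l σ := by
      simp only [PicX, Set.mem_setOf_eq]
      have h1 : iLC L x = N • qToC L w := by rw [← qToC_iLQ, ← hNx, map_zsmul]
      rw [h1, map_zsmul, LinearMap.smul_apply, hbw, smul_zero]
    have hlx : l γ x = 0 := hγ.1 x hxPic
    have hQ : bQ L l (iLQ L γ) w = 0 := by
      have h1 : (N : ℚ) * bQ L l (iLQ L γ) w = 0 := by
        rw [← zsmul_eq_mul, ← map_zsmul (bQ L l (iLQ L γ)) N w, hNx, bQ_iLQ_iLQ, hlx,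
          Int.cast_zero]
      rcases mul_eq_zero.mp h1 with h | h
      · exact absurd (by exact_mod_cast h) hN.ne'
      · exact h
    have hQ' : (l γ d : ℚ) - (a : ℚ) * (n : ℚ) = 0 := by
      rw [hw, map_sub, map_zsmul, bQ_iLQ_iLQ, zsmul_eq_mul, hn] at hQ
      exact hQ
    have hZ : l γ d - a * n = 0 := by exact_mod_cast hQ'
    simp only [mZ]
    push_cast
    omega
  refine ⟨c1, ?_, ?_, ?_, ?_, rfl⟩
  -- Conjunct 2: injectivity
  · intro γ _ γ' _ n n' _ _ h
    simpa using congrArg (fun p : MukaiLattice L => p.2.1) h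
  -- Conjunct 3: isometry
  · intro γ _ γ' _ n n' _ _
    simp [mZ]
  -- Conjunct 4: surjectivity onto T(φ)
  · intro x hx
    obtain ⟨a, g, b⟩ := x
    have h001 : (((0 : ℤ), (0 : L), (1 : ℤ)) : MukaiLattice L) ∈ PicPhi L l σ B := by
      simp [PicPhi, mC, embC, expB]
    have ha : a = 0 := by
      have h := hx _ h001
      simp only [mZ, map_zero, LinearMap.zero_apply] at h
      omega
    have hdenC : iLC L B₀ = NB • qToC L B := by rw [← qToC_iLQ, ← hNBe, map_zsmul]
    have hden : ((NB, B₀, (0 : ℤ)) : MukaiLattice L) ∈ PicPhi L l σ B := by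
      simp only [PicPhi, Set.mem_setOf_eq, mC, embC, expB]
      rw [hdenC, map_zsmul, LinearMap.smul_apply, zsmul_eq_mul]
      push_cast
      ring
    have hgB : l g B₀ = NB * b := by
      have h := hx _ hden
      simp only [mZ, ha] at h
      omega
    have hTX : g ∈ TX L l σ := by
      intro δ₀ hδ₀
      have hmem : (((0 : ℤ), δ₀, (0 : ℤ)) : MukaiLattice L) ∈ PicPhi L l σ B := by
        simp only [PicPhi, Set.mem_setOf_eq, mC, embC, expB]
        have hb : bC L l (iLC L δ₀) σ = 0 := hδ₀
        rw [hb]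
        push_cast
        ring
      have h := hx _ hmem
      simp only [mZ, ha] at h
      omega
    have hb : bQ L l (iLQ L g) B = (b : ℚ) := by
      have h1 : (NB : ℚ) * bQ L l (iLQ L g) B = (NB : ℚ) * (b : ℚ) := by
        rw [← zsmul_eq_mul, ← map_zsmul (bQ L l (iLQ L g)) NB B, hNBe, bQ_iLQ_iLQ, hgB]
        push_cast
        ring
      exact mul_left_cancel₀ hNB' h1
    exact ⟨g, ⟨hTX, ⟨b, hb⟩⟩, b, hb, by rw [ha]⟩
  -- Conjunct 5: σ ∈ span of T(X,α_B)
  · set F : Set (L →ₗ[ℤ] ℤ) := (fun δ => l δ) '' (PicX L l σ) with hF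
    set D : Submodule ℤ (L →ₗ[ℤ] ℤ) := Submodule.span ℤ F with hD
    obtain ⟨S, hS⟩ : D.FG := IsNoetherian.noetherian D
    have hev : ∀ g ∈ D, evC L g σ = 0 := by
      intro g hg
      rw [hD] at hg
      induction hg using Submodule.span_induction with
      | mem g hgF =>
        obtain ⟨δ, hδ, rfl⟩ := hgF
        rw [← bC_iLC_eq_evC]
        exact hδ
      | zero => exact evC_zero_apply L σ
      | add u v _ _ hu hv => rw [evC_add_apply, hu, hv, add_zero]
      | smul n u _ hu => rw [evC_smul_apply, hu, smul_zero]
    have hSD : ∀ g ∈ S, evC L g σ = 0 := fun g hg =>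
      hev g (hS ▸ Submodule.subset_span hg)
    have hvanD : ∀ z : L, (∀ g ∈ S, g z = 0) → ∀ g ∈ D, g z = 0 := by
      intro z hz g hg
      rw [← hS] at hg
      induction hg using Submodule.span_induction with
      | mem g hgS => exact hz g hgS
      | zero => rfl
      | add u v _ _ hu hv => simp [hu, hv]
      | smul n u _ hu => simp [hu]
    have hTXeq : ∀ z : L, z ∈ TX L l σ ↔ ∀ g ∈ S, g z = 0 := by
      intro z
      constructor
      · intro hzTX
        have hDz : ∀ g ∈ D, g z = 0 := by
          intro g hgD
          rw [hD] at hgD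
          induction hgD using Submodule.span_induction with
          | mem g hgF =>
            obtain ⟨δ, hδ, rfl⟩ := hgF
            rw [hsymm δ z]
            exact hzTX δ hδ
          | zero => rfl
          | add u v _ _ hu hv => simp [hu, hv]
          | smul n u _ hu => simp [hu]
        exact fun g hg => hDz g (hS ▸ Submodule.subset_span hg)
      · intro hz δ hδ
        have hld : (l δ) ∈ D := by
          rw [hD]
          exact Submodule.subset_span ⟨δ, hδ, rfl⟩
        rw [hsymm z δ]
        exact hvanD z hz _ hld
    have hset : TX L l σ = ↑(S.inf LinearMap.ker) := by
      ext z
      rw [SetLike.mem_coe, Finset.inf_eq_iInf, Submodule.mem_iInf]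
      constructor
      · intro hz g
        rw [Submodule.mem_iInf]
        intro hg
        exact LinearMap.mem_ker.mpr ((hTXeq z).mp hz g hg)
      · intro hz
        refine (hTXeq z).mpr fun g hg => ?_
        have := hz g
        rw [Submodule.mem_iInf] at this
        exact LinearMap.mem_ker.mp (this hg)
    have hσTX : σ ∈ Submodule.span ℂ (iLC L '' TX L l σ) := by
      rw [hset]
      exact span_finset L S σ hSD
    have hmono : Submodule.span ℂ (iLC L '' TX L l σ) ≤
        Submodule.span ℂ (iLC L '' TXB L l σ B) := by
      rw [Submodule.span_le]
      rintro _ ⟨x, hxTX, rfl⟩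
      have hNx : (NB • x) ∈ TXB L l σ B := by
        refine ⟨fun δ hδ => ?_, ⟨l x B₀, ?_⟩⟩
        · rw [map_zsmul, LinearMap.smul_apply, hxTX δ hδ, smul_zero]
        · rw [map_zsmul, map_zsmul, LinearMap.smul_apply, zsmul_eq_mul, ← zsmul_eq_mul,
            ← map_zsmul (bQ L l (iLQ L x)) NB B, hNBe, bQ_iLQ_iLQ]
      have hNC : (NB : ℂ) ≠ 0 := by exact_mod_cast hNB.ne'
      have hxx : iLC L x = ((NB : ℂ))⁻¹ • iLC L (NB • x) := by
        rw [map_zsmul, ← Int.cast_smul_eq_zsmul ℂ, smul_smul, inv_mul_cancel₀ hNC, one_smul]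
      rw [hxx]
      exact Submodule.smul_mem _ _ (Submodule.subset_span ⟨NB • x, hNx, rfl⟩)
    exact hmono hσTX

end
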